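/- arXiv:1611.05556 — 2 statements merged into one kernel-verified Lean document; each statement's English description precedes it below -/
import Mathlib

section
/- Let n be a positive integer, P an n×n real matrix, λ > 0, and Q = λ • (P - I), where I is the n×n identity matrix. Then for every t ≥ 0 and all indices i, j, the (i,j) entry of exp(t • Q) equals the sum over n ∈ ℕ of exp(-λ·t) · ((λ·t)^n / n!) · (P^n)_{i,j}. -/
open Matrix

theorem uniformization_series
    (n : ℕ) (hn : 0 < n) (P : Matrix (Fin n) (Fin n) ℝ)
    (lam : ℝ) (hlam : 0 < lam)
    (Q : Matrix (Fin n) (Fin n) ℝ) (hQ : Q = lam • (P - 1)) :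
    ∀ t : ℝ, 0 ≤ t → ∀ i j : Fin n,
      NormedSpace.exp (t • Q) i j
        = ∑' k : ℕ,
            Real.exp (-lam * t) * ((lam * t) ^ k / (Nat.factorial k)) * (P ^ k) i j := by
  intro t ht i j
  letI : NormedRing (Matrix (Fin n) (Fin n) ℝ) := Matrix.linftyOpNormedRing
  letI : NormedAlgebra ℝ (Matrix (Fin n) (Fin n) ℝ) := Matrix.linftyOpNormedAlgebra
  set c : ℝ := lam * t with hc
  have hsplit : t • Q = c • P + (-c) • (1 : Matrix (Fin n) (Fin n) ℝ) := by
    rw [hQ]; rw [smul_smul, smul_sub]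
    rw [hc, mul_comm t lam]
    rw [neg_smul]
    abel
  have hcomm : Commute (c • P) ((-c) • (1 : Matrix (Fin n) (Fin n) ℝ)) := by
    apply Commute.smul_left
    apply Commute.smul_right
    exact Commute.one_right _
  have hexp : NormedSpace.exp (t • Q)
      = NormedSpace.exp (c • P) * NormedSpace.exp ((-c) • (1 : Matrix (Fin n) (Fin n) ℝ)) := by
    rw [hsplit, Matrix.exp_add_of_commute _ _ hcomm]
  have hdiag : NormedSpace.exp ((-c) • (1 : Matrix (Fin n) (Fin n) ℝ))
      = Matrix.diagonal (fun _ => Real.exp (-c)) := by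
    rw [Matrix.smul_one_eq_diagonal, Matrix.exp_diagonal]
    have hfun : NormedSpace.exp (fun _ : Fin n => -c) = fun _ : Fin n => Real.exp (-c) := by
      funext x
      rw [Pi.coe_exp, Real.exp_eq_exp_ℝ]
    rw [hfun]
  have hsum : Summable (fun k : ℕ => ((k.factorial : ℝ))⁻¹ • (c • P) ^ k) :=
    NormedSpace.expSeries_summable' (𝕂 := ℝ) (c • P)
  have hsum2 : Summable (fun k : ℕ => (((k.factorial : ℝ))⁻¹ • (c • P) ^ k) i) :=
    Pi.summable.mp hsum i
  have hentry : NormedSpace.exp (c • P) i j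
      = ∑' k : ℕ, ((k.factorial : ℝ))⁻¹ * c ^ k * (P ^ k) i j := by
    rw [NormedSpace.exp_eq_tsum (𝕂 := ℝ)]
    show (∑' k : ℕ, ((k.factorial : ℝ))⁻¹ • (c • P) ^ k) i j = _
    erw [tsum_apply hsum, tsum_apply hsum2]
    congr 1
    funext k
    simp [smul_pow, Matrix.smul_apply, smul_smul, mul_comm, mul_assoc, mul_left_comm]
  rw [hexp, hdiag, Matrix.mul_diagonal, hentry, ← tsum_mul_right]
  congr 1
  funext k
  rw [neg_mul, ← hc]
  ring
end

section
/- Let n be a positive integer, λ > 0, and let P be an n×n real matrix that is row-stochastic, i.e., all entries of P are nonnegative and every row of P sums to 1. Then for every t ≥ 0, the matrix exp(t·λ • (P - I)) is row-stochastic: all its entries are nonnegative and each of its rows sums to 1. -/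
open Matrix

attribute [local instance] Matrix.linftyOpNormedAddCommGroup Matrix.linftyOpNormedRing
  Matrix.linftyOpNormedAlgebra

lemma pow_entry_nonneg {n : ℕ} (P : Matrix (Fin n) (Fin n) ℝ)
    (hP : ∀ i j, 0 ≤ P i j) : ∀ k i j, 0 ≤ (P ^ k) i j := by
  intro k
  induction k with
  | zero => intro i j; rw [pow_zero]; by_cases h : i = j <;> simp [Matrix.one_apply, h]
  | succ k ih =>
      intro i j
      rw [pow_succ, Matrix.mul_apply]
      exact Finset.sum_nonneg fun l _ => mul_nonneg (ih i l) (hP l j)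

lemma pow_row_sum {n : ℕ} (P : Matrix (Fin n) (Fin n) ℝ)
    (hProw : ∀ i, ∑ j, P i j = 1) : ∀ k i, ∑ j, (P ^ k) i j = 1 := by
  intro k
  induction k with
  | zero => intro i; simp [Matrix.one_apply]
  | succ k ih =>
      intro i
      simp only [pow_succ, Matrix.mul_apply]
      rw [Finset.sum_comm]
      simp_rw [← Finset.mul_sum, hProw, mul_one]
      exact ih i

noncomputable def entryCLM (n : ℕ) (i j : Fin n) :
    Matrix (Fin n) (Fin n) ℝ →L[ℝ] ℝ :=
  LinearMap.toContinuousLinearMap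
    { toFun := fun M => M i j
      map_add' := fun _ _ => rfl
      map_smul' := fun _ _ => rfl }

noncomputable def rowSumCLM (n : ℕ) (i : Fin n) :
    Matrix (Fin n) (Fin n) ℝ →L[ℝ] ℝ :=
  LinearMap.toContinuousLinearMap
    { toFun := fun M => ∑ j, M i j
      map_add' := fun _ _ => by simp [Finset.sum_add_distrib]
      map_smul' := fun c M => by simp [Finset.mul_sum] }

theorem exp_of_uniformized_generator_is_row_stochastic
    (n : ℕ) (hn : 0 < n) (lam : ℝ) (hlam : 0 < lam)
    (P : Matrix (Fin n) (Fin n) ℝ)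
    (hPnonneg : ∀ i j, 0 ≤ P i j)
    (hProw : ∀ i, ∑ j, P i j = 1) :
    ∀ t : ℝ, 0 ≤ t →
      (∀ i j, 0 ≤ NormedSpace.exp ((t * lam) • (P - 1)) i j) ∧
        (∀ i, ∑ j, NormedSpace.exp ((t * lam) • (P - 1)) i j = 1) := by
  intro t ht
  set s : ℝ := t * lam with hs
  have hs0 : 0 ≤ s := mul_nonneg ht hlam.le
  have hsplit : s • (P - 1) = (-s) • (1 : Matrix (Fin n) (Fin n) ℝ) + s • P := by
    rw [smul_sub]; module
  have hcomm : Commute ((-s) • (1 : Matrix (Fin n) (Fin n) ℝ)) (s • P) :=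
    Commute.smul_left (Commute.smul_right (Commute.one_left P) s) (-s)
  have hone : NormedSpace.exp ((-s) • (1 : Matrix (Fin n) (Fin n) ℝ))
      = Real.exp (-s) • (1 : Matrix (Fin n) (Fin n) ℝ) := by
    have h1 : (-s) • (1 : Matrix (Fin n) (Fin n) ℝ)
        = Matrix.diagonal (fun _ => -s) := by
      ext i j
      by_cases h : i = j <;> simp [h, Matrix.one_apply]
    rw [h1, Matrix.exp_diagonal]
    ext i j
    by_cases h : i = j <;>
      simp [h, Matrix.one_apply, Pi.exp_def, Real.exp_eq_exp_ℝ]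
  have hexp : NormedSpace.exp (s • (P - 1))
      = Real.exp (-s) • NormedSpace.exp (s • P) := by
    rw [hsplit, Matrix.exp_add_of_commute _ _ hcomm, hone, smul_mul_assoc, one_mul]
  have hHS : HasSum (fun k : ℕ => ((Nat.factorial k : ℝ)⁻¹) • (s • P) ^ k)
      (NormedSpace.exp (s • P)) := NormedSpace.exp_series_hasSum_exp' (𝕂 := ℝ) _
  have hterm : ∀ (k : ℕ) (i j : Fin n),
      (((Nat.factorial k : ℝ)⁻¹) • (s • P) ^ k) i j
        = (Nat.factorial k : ℝ)⁻¹ * (s ^ k * (P ^ k) i j) := by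
    intro k i j
    rw [smul_pow]
    simp [Matrix.smul_apply]
  have hEntry : ∀ i j, 0 ≤ NormedSpace.exp (s • P) i j := by
    intro i j
    have h2 := (entryCLM n i j).hasSum hHS
    have h3 : HasSum (fun k : ℕ => (Nat.factorial k : ℝ)⁻¹ * (s ^ k * (P ^ k) i j))
        (NormedSpace.exp (s • P) i j) := by
      convert h2 using 1
      funext k
      exact (hterm k i j).symm
      rfl
    exact h3.nonneg fun k => mul_nonneg (by positivity)
      (mul_nonneg (pow_nonneg hs0 k) (pow_entry_nonneg P hPnonneg k i j))
  have hRow : ∀ i, ∑ j, NormedSpace.exp (s • P) i j = Real.exp s := by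
    intro i
    have h2 := (rowSumCLM n i).hasSum hHS
    have h3 : HasSum (fun k : ℕ => (Nat.factorial k : ℝ)⁻¹ • s ^ k)
        (∑ j, NormedSpace.exp (s • P) i j) := by
      convert h2 using 1
      funext k
      show (Nat.factorial k : ℝ)⁻¹ • s ^ k
          = ∑ j, (((Nat.factorial k : ℝ)⁻¹) • (s • P) ^ k) i j
      simp_rw [hterm k i]
      rw [← Finset.mul_sum, ← Finset.mul_sum, pow_row_sum P hProw k i, mul_one, smul_eq_mul]
      rfl
    have h4 : HasSum (fun k : ℕ => (Nat.factorial k : ℝ)⁻¹ • s ^ k) (Real.exp s) := by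
      rw [Real.exp_eq_exp_ℝ]
      exact NormedSpace.exp_series_hasSum_exp' (𝕂 := ℝ) s
    exact h3.unique h4
  refine ⟨fun i j => ?_, fun i => ?_⟩
  · rw [hexp]
    simp only [Matrix.smul_apply, smul_eq_mul]
    exact mul_nonneg (Real.exp_nonneg _) (hEntry i j)
  · rw [hexp]
    simp only [Matrix.smul_apply, smul_eq_mul]
    rw [← Finset.mul_sum, hRow, ← Real.exp_add]
    simp
end
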